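/- Let (ξ_i)_{i ≥ 1} be a sequence of independent, identically distributed ℝ^n-valued random vectors and let h : ℝ^d × ℝ^n → ℝ be a measurable function such that (i) almost surely, the map θ ∈ ℝ^d ↦ h(θ, ξ_1) is continuous, and (ii) for all C > 0, E[sup_{|θ| ≤ C} |h(θ, ξ_1)|] < ∞. Then the function θ ↦ E[h(θ, ξ_1)] is continuous on ℝ^d and, almost surely, for every C > 0, sup_{|θ| ≤ C} |(1/n) Σ_{i=1}^n h(θ, ξ_i) − E[h(θ, ξ_1)]| → 0 as n → ∞. -/

import Mathlib

open MeasureTheory ProbabilityTheory Filter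


open Set TopologicalSpace Topology
open scoped ENNReal NNReal

namespace USLLN


private lemma exists_le_add_of_iUnion {α : Type*} [MeasurableSpace α]
    (μ : Measure α) (A : ℕ → Set α) (hmono : Monotone A) {δ : ℝ≥0∞} (hδ : δ ≠ 0)
    (hfin : μ (⋃ m, A m) ≠ ⊤) :
    ∃ m, μ (⋃ m, A m) ≤ μ (A m) + δ := by
  have hU : μ (⋃ m, A m) = ⨆ m, μ (A m) := (hmono.directed_le).measure_iUnion
  rcases le_or_gt (μ (⋃ m, A m)) δ with hle | hlt
  · exact ⟨0, hle.trans le_add_self⟩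
  · have hs0 : μ (⋃ m, A m) ≠ 0 := fun h0 => by simp [h0] at hlt
    have hlt2 : μ (⋃ m, A m) - δ < μ (⋃ m, A m) := ENNReal.sub_lt_self hfin hs0 hδ
    rw [hU] at hlt2
    obtain ⟨m, hm⟩ := lt_iSup_iff.mp hlt2
    rw [← hU] at hm
    exact ⟨m, tsub_le_iff_right.mp hm.le⟩

private lemma isCompact_le_pi (σ : ℕ → ℕ) : IsCompact {x : ℕ → ℕ | ∀ i, x i ≤ σ i} := by
  have : {x : ℕ → ℕ | ∀ i, x i ≤ σ i} = Set.pi Set.univ (fun i => Set.Iic (σ i)) := by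
    ext x; simp [Set.mem_pi, Set.mem_Iic, Pi.le_def]
  rw [this]
  exact isCompact_univ_pi (fun i => (Set.finite_Iic _).isCompact)

private lemma geom_sum_bound (k : ℕ) : (∑ j ∈ Finset.range k, (2⁻¹ : ℝ≥0∞) ^ (j + 1)) ≤ 1 := by
  have key : ∀ k : ℕ, (∑ j ∈ Finset.range k, (2⁻¹ : ℝ≥0∞) ^ (j + 1)) + 2⁻¹ ^ k = 1 := by
    intro k
    induction k with
    | zero => simp
    | succ k ih =>
      rw [Finset.sum_range_succ, add_assoc, ← ih]
      congr 1
      have h2 : (2⁻¹ : ℝ≥0∞) ^ (k + 1) + 2⁻¹ ^ (k + 1) = 2⁻¹ ^ k := by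
        rw [← two_mul, pow_succ, ← mul_assoc]
        rw [mul_comm (2 : ℝ≥0∞) _, mul_assoc, mul_comm (2 : ℝ≥0∞) _,
          ENNReal.inv_mul_cancel (by norm_num) (by norm_num), mul_one]
      rw [← h2]
  calc (∑ j ∈ Finset.range k, (2⁻¹ : ℝ≥0∞) ^ (j + 1))
      ≤ (∑ j ∈ Finset.range k, (2⁻¹ : ℝ≥0∞) ^ (j + 1)) + 2⁻¹ ^ k := self_le_add_right _ _
    _ = 1 := key k

/-- An analytic set in a metric space is null measurable for any finite Borel measure. -/
theorem analyticSet_nullMeasurableSet {α : Type*} [MetricSpace α] [MeasurableSpace α]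
    [OpensMeasurableSpace α] (μ : Measure α) [IsFiniteMeasure μ] {S : Set α}
    (hS : AnalyticSet S) : NullMeasurableSet S μ := by
  rw [AnalyticSet_def] at hS
  rcases hS with rfl | ⟨f, hf, rfl⟩
  · exact NullMeasurableSet.of_null (by simp)
  -- Key claim: inner approximation by compact sets.
  have key : ∀ ε : ℝ≥0∞, ε ≠ 0 → ∃ t, IsCompact t ∧ t ⊆ Set.range f ∧
      μ (Set.range f) ≤ μ t + ε := by
    intro ε hε
    set T : (ℕ → ℕ) → ℕ → Set (ℕ → ℕ) := fun σ k => {x | ∀ i < k, x i ≤ σ i} with hT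
    -- one-step choice
    have step : ∀ (σ : ℕ → ℕ) (k : ℕ), ∃ m : ℕ,
        μ (f '' T σ k) ≤ μ (f '' T (Function.update σ k m) (k + 1)) + ε * 2⁻¹ ^ (k + 1) := by
      intro σ k
      have hmono : Monotone fun m => f '' T (Function.update σ k m) (k + 1) := by
        intro m m' hmm'
        apply Set.image_mono
        intro x hx i hi
        have hxi := hx i hi
        rcases eq_or_ne i k with rfl | hik
        · rw [Function.update_self] at hxi ⊢
          exact hxi.trans hmm'
        · rwa [Function.update_of_ne hik] at hxi ⊢
      have hsets : (⋃ m, T (Function.update σ k m) (k + 1)) = T σ k := by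
        ext x
        simp only [Set.mem_iUnion, hT, Set.mem_setOf_eq]
        constructor
        · rintro ⟨m, hm⟩ i hi
          have := hm i (hi.trans (Nat.lt_succ_self k))
          rwa [Function.update_of_ne hi.ne] at this
        · intro hx
          refine ⟨x k, fun i hi => ?_⟩
          rcases eq_or_ne i k with rfl | hik
          · simp
          · rw [Function.update_of_ne hik]
            exact hx i (by omega)
      have hunion : (⋃ m, f '' T (Function.update σ k m) (k + 1)) = f '' T σ k := by
        rw [← Set.image_iUnion, hsets]
      have hδ : ε * 2⁻¹ ^ (k + 1) ≠ 0 := by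
        simp [hε, pow_ne_zero, ENNReal.inv_ne_zero]
      obtain ⟨m, hm⟩ := exists_le_add_of_iUnion μ _ hmono hδ
        (by rw [hunion]; exact measure_ne_top μ _)
      rw [hunion] at hm
      exact ⟨m, hm⟩
    -- recursive construction of the index bound sequence
    let g : ℕ → (ℕ → ℕ) := fun k => Nat.rec (motive := fun _ => ℕ → ℕ) (fun _ => 0)
      (fun k gk => Function.update gk k (Classical.choose (step gk k))) k
    have hg_succ : ∀ k, g (k + 1) = Function.update (g k) k (Classical.choose (step (g k) k)) :=
      fun k => rfl
    set σ : ℕ → ℕ := fun k => g (k + 1) k with hσ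
    have hstable : ∀ m k, k ≤ m → ∀ i < k, g m i = g k i := by
      intro m
      induction m with
      | zero => intro k hk i hi; omega
      | succ m ih =>
        intro k hk i hi
        rcases Nat.eq_or_lt_of_le hk with rfl | hlt
        · rfl
        · have hkm : k ≤ m := by omega
          rw [hg_succ m, Function.update_of_ne (by omega : i ≠ m)]
          exact ih k hkm i hi
    have hσg : ∀ k, ∀ i < k, σ i = g k i := by
      intro k i hi
      rw [hσ]
      exact (hstable k (i + 1) (by omega) i (by omega)).symm
    have hTg : ∀ k, T (g k) k = T σ k := by
      intro k
      ext x
      simp only [hT, Set.mem_setOf_eq]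
      exact forall_congr' fun i => imp_congr_right fun hi => by rw [hσg k i hi]
    -- the invariant
    have inv : ∀ k, μ (Set.range f) ≤ μ (f '' T (g k) k) +
        ε * ∑ j ∈ Finset.range k, (2⁻¹ : ℝ≥0∞) ^ (j + 1) := by
      intro k
      induction k with
      | zero =>
        have : T (g 0) 0 = Set.univ := by ext x; simp [hT]
        simp [this]
      | succ k ih =>
        have hc := Classical.choose_spec (step (g k) k)
        rw [← hg_succ k] at hc
        calc μ (Set.range f) ≤ μ (f '' T (g k) k) +
              ε * ∑ j ∈ Finset.range k, (2⁻¹ : ℝ≥0∞) ^ (j + 1) := ih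
          _ ≤ (μ (f '' T (g (k + 1)) (k + 1)) + ε * 2⁻¹ ^ (k + 1)) +
              ε * ∑ j ∈ Finset.range k, (2⁻¹ : ℝ≥0∞) ^ (j + 1) := by
                exact add_le_add_left hc _
          _ = μ (f '' T (g (k + 1)) (k + 1)) +
              ε * ∑ j ∈ Finset.range (k + 1), (2⁻¹ : ℝ≥0∞) ^ (j + 1) := by
                rw [Finset.sum_range_succ, mul_add, add_assoc, add_comm (ε * 2⁻¹ ^ (k+1))]
    have inv' : ∀ k, μ (Set.range f) ≤ μ (f '' T σ k) + ε := by
      intro k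
      have h1 := inv k
      rw [hTg k] at h1
      refine h1.trans (add_le_add_right ?_ _)
      calc ε * ∑ j ∈ Finset.range k, (2⁻¹ : ℝ≥0∞) ^ (j + 1) ≤ ε * 1 :=
            mul_le_mul_right (geom_sum_bound k) ε
        _ = ε := mul_one ε
    -- the compact set
    set Kσ : Set (ℕ → ℕ) := {x | ∀ i, x i ≤ σ i} with hKσdef
    have hKσ : IsCompact Kσ := isCompact_le_pi σ
    -- the intersection of closures is inside `f '' Kσ`
    have hincl : (⋂ k, closure (f '' T σ k)) ⊆ f '' Kσ := by
      intro y hy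
      simp only [Set.mem_iInter] at hy
      have hyk : ∀ k : ℕ, ∃ z, z ∈ T σ k ∧ dist y (f z) < 1 / (k + 1) := by
        intro k
        have := Metric.mem_closure_iff.mp (hy k) (1 / (k + 1)) (by positivity)
        obtain ⟨b, hb, hdb⟩ := this
        obtain ⟨z, hz, rfl⟩ := hb
        exact ⟨z, hz, hdb⟩
      choose x hxT hxd using hyk
      set M : ℕ → ℕ := fun i => max (σ i) (Finset.sup (Finset.range (i + 1)) fun k => x k i)
        with hM
      have hxM : ∀ k, x k ∈ {z : ℕ → ℕ | ∀ i, z i ≤ M i} := by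
        intro k i
        rcases lt_or_ge i k with hik | hik
        · exact le_trans (hxT k i hik) (le_max_left _ _)
        · exact le_trans (Finset.le_sup (f := fun k => x k i)
            (Finset.mem_range.mpr (by omega))) (le_max_right _ _)
      obtain ⟨a, haM, φ, hφ, hconv⟩ := (isCompact_le_pi M).tendsto_subseq hxM
      have ha : a ∈ Kσ := by
        intro i
        have hcoord : Tendsto (fun j => x (φ j) i) atTop (𝓝 (a i)) :=
          ((continuous_apply i).tendsto a).comp hconv
        have hev1 : ∀ᶠ j in atTop, x (φ j) i ∈ ({a i} : Set ℕ) :=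
          hcoord ((isOpen_discrete _).mem_nhds rfl)
        have hev2 : ∀ᶠ j in atTop, i < φ j := hφ.tendsto_atTop.eventually_gt_atTop i
        obtain ⟨j, hj1, hj2⟩ := (hev1.and hev2).exists
        have : x (φ j) i ≤ σ i := hxT (φ j) i hj2
        simpa [Set.mem_singleton_iff.mp hj1] using this
      have hfa : Tendsto (fun j => f (x (φ j))) atTop (𝓝 (f a)) := (hf.tendsto a).comp hconv
      have hfy : Tendsto (fun j => f (x (φ j))) atTop (𝓝 y) := by
        rw [tendsto_iff_dist_tendsto_zero]
        refine squeeze_zero (fun j => dist_nonneg) (fun j => ?_)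
          tendsto_one_div_add_atTop_nhds_zero_nat
        rw [dist_comm]
        refine le_trans (hxd (φ j)).le ?_
        have hj : (j : ℝ) ≤ (φ j : ℝ) := Nat.cast_le.mpr hφ.le_apply
        apply one_div_le_one_div_of_le
        · positivity
        · linarith
      exact ⟨a, ha, tendsto_nhds_unique hfa hfy⟩
    -- measure bound
    have hanti : Antitone fun k => closure (f '' T σ k) := by
      intro k k' hkk'
      apply closure_mono
      apply Set.image_mono
      intro x hx i hi
      exact hx i (lt_of_lt_of_le hi hkk')
    have htend : Tendsto (fun k => μ (closure (f '' T σ k))) atTop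
        (𝓝 (μ (⋂ k, closure (f '' T σ k)))) :=
      tendsto_measure_iInter_atTop (fun k => isClosed_closure.nullMeasurableSet) hanti
        ⟨0, measure_ne_top μ _⟩
    have hub : ∀ k, μ (Set.range f) ≤ μ (closure (f '' T σ k)) + ε := fun k =>
      (inv' k).trans (add_le_add_left (measure_mono subset_closure) ε)
    have hfinal : μ (Set.range f) ≤ μ (⋂ k, closure (f '' T σ k)) + ε :=
      ge_of_tendsto' (htend.add tendsto_const_nhds) hub
    refine ⟨f '' Kσ, hKσ.image hf, Set.image_subset_range f Kσ, ?_⟩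
    exact hfinal.trans (add_le_add_left (measure_mono hincl) ε)
  -- conclude null measurability from inner compact approximation
  have hts : ∀ m : ℕ, ∃ t, IsCompact t ∧ t ⊆ Set.range f ∧
      μ (Set.range f) ≤ μ t + ((m : ℝ≥0∞))⁻¹ := by
    intro m
    rcases eq_or_ne (m : ℝ≥0∞)⁻¹ 0 with h0 | h0
    · simp only [ENNReal.inv_eq_zero] at h0
      exact absurd h0 (by exact_mod_cast ENNReal.natCast_ne_top m)
    · exact key _ h0
  choose t ht htsub htle using hts
  set B : Set α := ⋃ m, t m with hB
  have hBmeas : MeasurableSet B :=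
    MeasurableSet.iUnion fun m => ((ht m).isClosed).measurableSet
  have hBsub : B ⊆ Set.range f := Set.iUnion_subset htsub
  have hμB : μ (Set.range f) ≤ μ B := by
    refine ENNReal.le_of_forall_pos_le_add fun δ hδ _ => ?_
    obtain ⟨m, hm⟩ := ENNReal.exists_inv_nat_lt (by exact_mod_cast hδ.ne' : (δ : ℝ≥0∞) ≠ 0)
    calc μ (Set.range f) ≤ μ (t m) + (m : ℝ≥0∞)⁻¹ := htle m
      _ ≤ μ B + δ := add_le_add (measure_mono (Set.subset_iUnion t m)) hm.le
  have hμB' : μ B = μ (Set.range f) := le_antisymm (measure_mono hBsub) hμB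
  -- now `range f` differs from the measurable `B` by a null set
  set D := toMeasurable μ (Set.range f) with hD
  have hDmeas : MeasurableSet D := measurableSet_toMeasurable μ _
  have hSD : Set.range f ⊆ D := subset_toMeasurable μ _
  have hμD : μ D = μ (Set.range f) := measure_toMeasurable _
  have hnull : μ (D \ B) = 0 := by
    rw [measure_diff (hBsub.trans hSD) hBmeas.nullMeasurableSet (measure_ne_top μ B),
      hμD, hμB', tsub_self]
  have : Set.range f = B ∪ (Set.range f \ B) := (Set.union_diff_cancel hBsub).symm
  rw [this]
  exact (hBmeas.nullMeasurableSet).union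
    (NullMeasurableSet.of_null (measure_mono_null (Set.diff_subset_diff_left hSD) hnull))



/-- There is a Borel measurable map `G` from `ℝⁿ` to `C(closedBall 0 C, ℝ)` such that
`G x` is the restriction of `h (·) x` whenever the latter is continuous. -/
lemma exists_good_representative {d n : ℕ}
    (h : EuclideanSpace ℝ (Fin d) → (Fin n → ℝ) → ℝ)
    (hmeas : Measurable fun p : EuclideanSpace ℝ (Fin d) × (Fin n → ℝ) => h p.1 p.2)
    (C : ℝ) (hC : 0 < C) :
    ∃ G : (Fin n → ℝ) → C(Metric.closedBall (0 : EuclideanSpace ℝ (Fin d)) C, ℝ),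
      (@Measurable _ _ _ (borel _) G) ∧
      ∀ x : Fin n → ℝ, Continuous (fun θ => h θ x) →
        ∀ θ : Metric.closedBall (0 : EuclideanSpace ℝ (Fin d)) C, G x θ = h θ.1 x := by
  classical
  set K := Metric.closedBall (0 : EuclideanSpace ℝ (Fin d)) C with hK
  haveI : CompactSpace K := isCompact_iff_compactSpace.mp (isCompact_closedBall _ _)
  haveI : Nonempty K := ⟨⟨0, by simp [hK, hC.le]⟩⟩
  letI : MeasurableSpace C(K, ℝ) := borel _
  haveI : BorelSpace C(K, ℝ) := ⟨rfl⟩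
  obtain ⟨e, he⟩ := TopologicalSpace.exists_dense_seq K
  obtain ⟨gs, hgs⟩ := TopologicalSpace.exists_dense_seq C(K, ℝ)
  have hmx : ∀ θ : EuclideanSpace ℝ (Fin d), Measurable fun x : Fin n → ℝ => h θ x :=
    fun θ => hmeas.comp (measurable_const.prodMk measurable_id)
  -- the approximating predicate
  set basep : ℕ → ℕ → Set (Fin n → ℝ) := fun j m =>
    {x | ∀ i : ℕ, |gs m (e i) - h (e i).1 x| ≤ 1 / (j + 1)} with hbasepdef
  have hbasep : ∀ j m, MeasurableSet (basep j m) := by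
    intro j m
    have : basep j m = ⋂ i : ℕ, {x | |gs m (e i) - h (e i).1 x| ≤ 1 / (j + 1)} := by
      ext x; simp [hbasepdef]
    rw [this]
    exact MeasurableSet.iInter fun i =>
      measurableSet_le (((hmx _).const_sub _).abs) measurable_const
  set p : ℕ → ℕ → (Fin n → ℝ) → Prop := fun j m x =>
    x ∈ basep j m ∨ x ∉ ⋃ m', basep j m' with hpdef
  have htotal : ∀ j x, ∃ m, p j m x := by
    intro j x
    by_cases hx : x ∈ ⋃ m', basep j m'
    · obtain ⟨m, hm⟩ := Set.mem_iUnion.mp hx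
      exact ⟨m, Or.inl hm⟩
    · exact ⟨0, Or.inr hx⟩
  set F : ℕ → (Fin n → ℝ) → C(K, ℝ) := fun j x => gs (Nat.find (htotal j x)) with hFdef
  have hF : ∀ j, Measurable (F j) := by
    intro j
    have hpm : ∀ m, MeasurableSet {x | p j m x} := by
      intro m
      have : {x | p j m x} = basep j m ∪ (⋃ m', basep j m')ᶜ := by
        ext x; simp [hpdef]
      rw [this]
      exact (hbasep j m).union (MeasurableSet.iUnion fun m' => hbasep j m').compl
    exact Measurable.find (f := fun m (_ : Fin n → ℝ) => gs m)
      (fun m => measurable_const) hpm (htotal j)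
  -- convergence at points of continuity
  have hFconv : ∀ (x : Fin n → ℝ) (hcx : Continuous fun θ : K => h θ.1 x),
      Tendsto (fun j => F j x) atTop (𝓝 ⟨fun θ : K => h θ.1 x, hcx⟩) := by
    intro x hcx
    set gbar : C(K, ℝ) := ⟨fun θ : K => h θ.1 x, hcx⟩ with hgbar
    have hstep : ∀ j : ℕ, dist (F j x) gbar ≤ 1 / (j + 1) := by
      intro j
      have δpos : (0 : ℝ) < 1 / (j + 1) := by positivity
      obtain ⟨m₀, hm₀⟩ := hgs.exists_dist_lt gbar (half_pos δpos)
      have hm₀base : x ∈ basep j m₀ := by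
        intro i
        have h1 : |gs m₀ (e i) - h (e i).1 x| = ‖(gs m₀ - gbar) (e i)‖ := by
          simp [hgbar, ContinuousMap.sub_apply, Real.norm_eq_abs]
        rw [h1]
        calc ‖(gs m₀ - gbar) (e i)‖ ≤ ‖gs m₀ - gbar‖ := ContinuousMap.norm_coe_le_norm _ _
          _ = dist (gs m₀) gbar := (dist_eq_norm _ _).symm
          _ = dist gbar (gs m₀) := dist_comm _ _
          _ ≤ 1 / (j + 1) := hm₀.le.trans (by linarith)
      have hmem : x ∈ ⋃ m', basep j m' := Set.mem_iUnion.mpr ⟨m₀, hm₀base⟩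
      have hfind := Nat.find_spec (htotal j x)
      rcases hfind with hb | habs
      swap
      · exact absurd hmem habs
      -- extend the inequality from the dense sequence to all of K
      have hall : ∀ θ : K, |gs (Nat.find (htotal j x)) θ - gbar θ| ≤ 1 / (j + 1) := by
        have hcl : IsClosed {θ : K | |gs (Nat.find (htotal j x)) θ - gbar θ| ≤ 1 / (j + 1)} :=
          isClosed_le (((gs _).continuous.sub gbar.continuous).abs) continuous_const
        have hsub : Set.range e ⊆
            {θ : K | |gs (Nat.find (htotal j x)) θ - gbar θ| ≤ 1 / (j + 1)} := by
          rintro _ ⟨i, rfl⟩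
          exact hb i
        exact fun θ => (closure_minimal hsub hcl) (he θ)
      rw [dist_eq_norm]
      refine (ContinuousMap.norm_le _ δpos.le).mpr fun θ => ?_
      simpa [ContinuousMap.sub_apply, Real.norm_eq_abs] using hall θ
    rw [tendsto_iff_dist_tendsto_zero]
    exact squeeze_zero (fun j => dist_nonneg) hstep tendsto_one_div_add_atTop_nhds_zero_nat
  -- the set where the approximations converge
  set Q : Set (Fin n → ℝ) := {x | CauchySeq fun j => F j x} with hQdef
  have hQmeas : MeasurableSet Q := by
    have hQeq : Q = ⋂ k : ℕ, ⋃ N : ℕ, ⋂ m, ⋂ m', ⋂ (_ : m ≥ N), ⋂ (_ : m' ≥ N),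
        {x | dist (F m x) (F m' x) < 1 / (k + 1)} := by
      ext x
      simp only [hQdef, Set.mem_setOf_eq, Set.mem_iInter, Set.mem_iUnion]
      constructor
      · intro hcs k
        obtain ⟨N, hN⟩ := Metric.cauchySeq_iff.mp hcs (1 / (k + 1)) (by positivity)
        exact ⟨N, fun m m' hm hm' => hN m hm m' hm'⟩
      · intro hx
        refine Metric.cauchySeq_iff.mpr fun ε hε => ?_
        obtain ⟨k, hk⟩ := exists_nat_one_div_lt hε
        obtain ⟨N, hN⟩ := hx k
        exact ⟨N, fun m hm m' hm' => (hN m m' hm hm').trans hk⟩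
    rw [hQeq]
    refine MeasurableSet.iInter fun k => MeasurableSet.iUnion fun N =>
      MeasurableSet.iInter fun m => MeasurableSet.iInter fun m' =>
      MeasurableSet.iInter fun _ => MeasurableSet.iInter fun _ => ?_
    exact measurableSet_lt (Measurable.dist (hF m) (hF m')) measurable_const
  set F' : ℕ → (Fin n → ℝ) → C(K, ℝ) := fun j => Q.piecewise (F j) (fun _ => 0) with hF'def
  have hF'meas : ∀ j, Measurable (F' j) := fun j =>
    Measurable.piecewise hQmeas (hF j) measurable_const
  have hconvAll : ∀ x, ∃ l, Tendsto (fun j => F' j x) atTop (𝓝 l) := by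
    intro x
    by_cases hx : x ∈ Q
    · have heq : (fun j => F' j x) = fun j => F j x :=
        funext fun j => Set.piecewise_eq_of_mem _ _ _ hx
      rw [heq]
      exact cauchySeq_tendsto_of_complete hx
    · have heq : (fun j => F' j x) = fun _ => 0 :=
        funext fun j => Set.piecewise_eq_of_notMem _ _ _ hx
      rw [heq]
      exact ⟨0, tendsto_const_nhds⟩
  set G : (Fin n → ℝ) → C(K, ℝ) := fun x => limUnder atTop fun j => F' j x with hGdef
  have hGtendAll : ∀ x, Tendsto (fun j => F' j x) atTop (𝓝 (G x)) :=
    fun x => tendsto_nhds_limUnder (hconvAll x)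
  have hGmeas : Measurable G :=
    measurable_of_tendsto_metrizable' atTop hF'meas (tendsto_pi_nhds.mpr hGtendAll)
  refine ⟨G, hGmeas, ?_⟩
  intro x hcx
  have hcx' : Continuous fun θ : K => h θ.1 x := hcx.comp continuous_subtype_val
  have h1 := hFconv x hcx'
  have hxQ : x ∈ Q := h1.cauchySeq
  have h2 : Tendsto (fun j => F' j x) atTop (𝓝 ⟨fun θ : K => h θ.1 x, hcx'⟩) := by
    have heq : (fun j => F' j x) = fun j => F j x :=
      funext fun j => Set.piecewise_eq_of_mem _ _ _ hxQ
    rw [heq]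
    exact h1
  have hGx : G x = ⟨fun θ : K => h θ.1 x, hcx'⟩ := tendsto_nhds_unique (hGtendAll x) h2
  intro θ
  rw [hGx]
  rfl



instance compactSpace_closedBall {d : ℕ} (C : ℝ) :
    CompactSpace (Metric.closedBall (0 : EuclideanSpace ℝ (Fin d)) C) :=
  isCompact_iff_compactSpace.mp (isCompact_closedBall _ _)

lemma master {Ω : Type*} [MeasurableSpace Ω]
    (μ : Measure Ω) [IsProbabilityMeasure μ]
    {d n : ℕ} (ξ : ℕ → Ω → (Fin n → ℝ))
    (hξmeas : ∀ i, Measurable (ξ i))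
    (hξindep : iIndepFun ξ μ)
    (hξident : ∀ i, Measure.map (ξ i) μ = Measure.map (ξ 0) μ)
    (h : EuclideanSpace ℝ (Fin d) → (Fin n → ℝ) → ℝ)
    (hmeas : Measurable fun p : EuclideanSpace ℝ (Fin d) × (Fin n → ℝ) => h p.1 p.2)
    (hcont : ∀ᵐ ω ∂μ, Continuous fun θ => h θ (ξ 0 ω))
    (hint : ∀ C > (0 : ℝ), Integrable
      (fun ω => ⨆ θ : Metric.closedBall (0 : EuclideanSpace ℝ (Fin d)) C, |h θ (ξ 0 ω)|) μ)
    (C : ℝ) (hC : 0 < C) :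
    ContinuousOn (fun θ => ∫ ω, h θ (ξ 0 ω) ∂μ)
      (Metric.closedBall (0 : EuclideanSpace ℝ (Fin d)) C) ∧
    ∀ᵐ ω ∂μ, ∃ A : ℕ → C(Metric.closedBall (0 : EuclideanSpace ℝ (Fin d)) C, ℝ),
      (∀ (M : ℕ) (θ : Metric.closedBall (0 : EuclideanSpace ℝ (Fin d)) C),
        A M θ = (M : ℝ)⁻¹ * ∑ i ∈ Finset.range M, h θ.1 (ξ i ω) -
          ∫ ω', h θ.1 (ξ 0 ω') ∂μ) ∧
      Tendsto (fun M => ‖A M‖) atTop (𝓝 0) := by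
  classical
  set K := Metric.closedBall (0 : EuclideanSpace ℝ (Fin d)) C with hKdef
  haveI : Nonempty K := ⟨⟨0, by simp [hKdef, hC.le]⟩⟩
  letI : MeasurableSpace C(K, ℝ) := borel _
  haveI : BorelSpace C(K, ℝ) := ⟨rfl⟩
  obtain ⟨G, hGmeas, hGprop⟩ := exists_good_representative h hmeas C hC
  set ν : Measure (Fin n → ℝ) := Measure.map (ξ 0) μ with hνdef
  haveI : IsProbabilityMeasure ν := Measure.isProbabilityMeasure_map (hξmeas 0).aemeasurable
  -- the bad set
  set B : Set (K × (Fin n → ℝ)) := {q | h q.1.1 q.2 ≠ G q.2 q.1} with hBdef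
  have hBmeas : MeasurableSet B := by
    have hf1 : Measurable fun q : K × (Fin n → ℝ) => h q.1.1 q.2 :=
      hmeas.comp ((measurable_subtype_coe.comp measurable_fst).prodMk measurable_snd)
    have hf2 : Measurable fun q : K × (Fin n → ℝ) => G q.2 q.1 := by
      have heval : Continuous fun r : C(K, ℝ) × K => r.1 r.2 := continuous_eval
      exact heval.measurable.comp ((hGmeas.comp measurable_snd).prodMk measurable_fst)
    exact (measurableSet_eq_fun hf1 hf2).compl
  set Bad : Set (Fin n → ℝ) := Prod.snd '' B with hBaddef
  have hnotbad1 : ∀ x : Fin n → ℝ, (∀ θ : K, G x θ = h θ.1 x) → x ∉ Bad := by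
    rintro x hall ⟨q, hqB, rfl⟩
    exact hqB (hall q.1).symm
  have hnotbad2 : ∀ x : Fin n → ℝ, x ∉ Bad → ∀ θ : K, G x θ = h θ.1 x := by
    intro x hx θ
    by_contra hne
    exact hx ⟨(θ, x), fun hh => hne hh.symm, rfl⟩
  have hBadAnalytic : AnalyticSet Bad := hBmeas.analyticSet_image measurable_snd
  obtain ⟨B₀, hB₀meas, hB₀ae⟩ := analyticSet_nullMeasurableSet ν hBadAnalytic
  obtain ⟨hBadB₀, hB₀Bad⟩ := (ae_eq_set).mp hB₀ae
  -- ξ 0 avoids Bad a.s.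
  have hgood0 : ∀ᵐ ω ∂μ, ∀ θ : K, G (ξ 0 ω) θ = h θ.1 (ξ 0 ω) :=
    hcont.mono fun ω hω => hGprop (ξ 0 ω) hω
  have hμ0 : μ {ω | ξ 0 ω ∈ Bad} = 0 := by
    have h1 : ∀ᵐ ω ∂μ, ξ 0 ω ∉ Bad := hgood0.mono fun ω hω => hnotbad1 _ hω
    have := ae_iff.mp h1
    simpa [not_not] using this
  -- ν B₀ = 0
  have hνB₀ : ν B₀ = 0 := by
    have hmap : ν B₀ = μ (ξ 0 ⁻¹' B₀) := Measure.map_apply (hξmeas 0) hB₀meas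
    have hsub : ξ 0 ⁻¹' B₀ ⊆ {ω | ξ 0 ω ∈ Bad} ∪ ξ 0 ⁻¹' (toMeasurable ν (B₀ \ Bad)) := by
      intro ω hω
      by_cases hb : ξ 0 ω ∈ Bad
      · exact Or.inl hb
      · exact Or.inr (subset_toMeasurable ν _ ⟨hω, hb⟩)
    have h2 : μ (ξ 0 ⁻¹' (toMeasurable ν (B₀ \ Bad))) = 0 := by
      rw [← Measure.map_apply (hξmeas 0) (measurableSet_toMeasurable _ _)]
      rw [← hνdef, measure_toMeasurable]
      exact hB₀Bad
    refine le_antisymm ?_ zero_le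
    rw [hmap]
    calc μ (ξ 0 ⁻¹' B₀) ≤ μ ({ω | ξ 0 ω ∈ Bad} ∪ ξ 0 ⁻¹' (toMeasurable ν (B₀ \ Bad))) :=
          measure_mono hsub
      _ ≤ μ {ω | ξ 0 ω ∈ Bad} + μ (ξ 0 ⁻¹' (toMeasurable ν (B₀ \ Bad))) := measure_union_le _ _
      _ = 0 := by rw [hμ0, h2, add_zero]
  -- all ξ i avoid Bad a.s.
  have hgoodi : ∀ i, ∀ᵐ ω ∂μ, ∀ θ : K, G (ξ i ω) θ = h θ.1 (ξ i ω) := by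
    intro i
    have hBadsub : Bad ⊆ B₀ ∪ toMeasurable ν (Bad \ B₀) := by
      intro x hx
      by_cases hb : x ∈ B₀
      · exact Or.inl hb
      · exact Or.inr (subset_toMeasurable ν _ ⟨hx, hb⟩)
    have hnull : ν (B₀ ∪ toMeasurable ν (Bad \ B₀)) = 0 := by
      refine le_antisymm ?_ zero_le
      calc ν (B₀ ∪ toMeasurable ν (Bad \ B₀)) ≤ ν B₀ + ν (toMeasurable ν (Bad \ B₀)) :=
            measure_union_le _ _
        _ = 0 := by rw [hνB₀, measure_toMeasurable, hBadB₀, add_zero]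
    have hμi : μ {ω | ξ i ω ∈ Bad} = 0 := by
      refine le_antisymm ?_ zero_le
      calc μ {ω | ξ i ω ∈ Bad} ≤ μ (ξ i ⁻¹' (B₀ ∪ toMeasurable ν (Bad \ B₀))) :=
            measure_mono fun ω hω => hBadsub hω
        _ = (Measure.map (ξ i) μ) (B₀ ∪ toMeasurable ν (Bad \ B₀)) :=
            (Measure.map_apply (hξmeas i)
              (hB₀meas.union (measurableSet_toMeasurable _ _))).symm
        _ = ν (B₀ ∪ toMeasurable ν (Bad \ B₀)) := by rw [hξident i]
        _ = 0 := hnull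
    have h1 : ∀ᵐ ω ∂μ, ξ i ω ∉ Bad := by
      rw [ae_iff]
      simpa [not_not] using hμi
    exact h1.mono fun ω hω => hnotbad2 _ hω
  have heqi : ∀ᵐ ω ∂μ, ∀ i, ∀ θ : K, G (ξ i ω) θ = h θ.1 (ξ i ω) := ae_all_iff.mpr hgoodi
  -- the Banach-valued random variables
  set X : ℕ → Ω → C(K, ℝ) := fun i ω => G (ξ i ω) with hXdef
  have hXmeas : ∀ i, Measurable (X i) := fun i => hGmeas.comp (hξmeas i)
  have hXint : Integrable (X 0) μ := by
    refine Integrable.mono' (hint C hC) (hXmeas 0).aestronglyMeasurable ?_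
    filter_upwards [hgood0] with ω hω
    show ‖G (ξ 0 ω)‖ ≤ ⨆ θ : K, |h θ.1 (ξ 0 ω)|
    have hbdd : BddAbove (Set.range fun θ : K => |h θ.1 (ξ 0 ω)|) := by
      refine ⟨‖G (ξ 0 ω)‖, ?_⟩
      rintro _ ⟨θ, rfl⟩
      dsimp only
      rw [← hω θ, ← Real.norm_eq_abs]
      exact ContinuousMap.norm_coe_le_norm _ _
    have hnonneg : (0 : ℝ) ≤ ⨆ θ : K, |h θ.1 (ξ 0 ω)| := by
      have h0 : (0 : ℝ) ≤ |h ((⟨0, by simp [hKdef, hC.le]⟩ : K)).1 (ξ 0 ω)| := abs_nonneg _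
      exact h0.trans (le_ciSup hbdd _)
    refine (ContinuousMap.norm_le _ hnonneg).mpr fun θ => ?_
    rw [Real.norm_eq_abs, hω θ]
    exact le_ciSup hbdd θ
  have hXindep : Pairwise (Function.onFun (IndepFun · · μ) X) := fun i j hij =>
    (hξindep.indepFun hij).comp hGmeas hGmeas
  have hXident : ∀ i, IdentDistrib (X i) (X 0) μ μ := by
    intro i
    have hbase : IdentDistrib (ξ i) (ξ 0) μ μ :=
      ⟨(hξmeas i).aemeasurable, (hξmeas 0).aemeasurable, hξident i⟩
    exact hbase.comp hGmeas
  have hsl := strong_law_ae X hXint hXindep hXident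
  set EX : C(K, ℝ) := ∫ ω, X 0 ω ∂μ with hEXdef
  have heval : ∀ θ : K, EX θ = ∫ ω, h θ.1 (ξ 0 ω) ∂μ := by
    intro θ
    have h1 := (ContinuousMap.evalCLM ℝ θ).integral_comp_comm hXint
    have h2 : (ContinuousMap.evalCLM ℝ θ) EX = EX θ := rfl
    rw [← h2, ← h1]
    refine integral_congr_ae (heqi.mono fun ω hω => ?_)
    exact hω 0 θ
  constructor
  · rw [continuousOn_iff_continuous_restrict]
    have hrestr : K.restrict (fun θ => ∫ ω, h θ (ξ 0 ω) ∂μ) = ⇑EX :=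
      funext fun θ => (heval θ).symm
    change Continuous (K.restrict (fun θ => ∫ ω, h θ (ξ 0 ω) ∂μ))
    rw [hrestr]
    exact EX.continuous
  · filter_upwards [hsl, heqi] with ω hslω hωeq
    refine ⟨fun M => (M : ℝ)⁻¹ • (∑ i ∈ Finset.range M, X i ω) - EX, fun M θ => ?_, ?_⟩
    · simp only [ContinuousMap.sub_apply, ContinuousMap.smul_apply, ContinuousMap.sum_apply,
        smul_eq_mul]
      rw [heval θ]
      congr 2
      exact Finset.sum_congr rfl fun i _ => hωeq i θ
    · exact tendsto_iff_norm_sub_tendsto_zero.mp hslω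



theorem uniform_strong_law_of_large_numbers' {Ω : Type*} [MeasurableSpace Ω]
    (μ : Measure Ω) [IsProbabilityMeasure μ]
    {d n : ℕ} (ξ : ℕ → Ω → (Fin n → ℝ))
    (hξmeas : ∀ i, Measurable (ξ i))
    (hξindep : iIndepFun ξ μ)
    (hξident : ∀ i, Measure.map (ξ i) μ = Measure.map (ξ 0) μ)
    (h : EuclideanSpace ℝ (Fin d) → (Fin n → ℝ) → ℝ)
    (hmeas : Measurable fun p : EuclideanSpace ℝ (Fin d) × (Fin n → ℝ) => h p.1 p.2)
    (hcont : ∀ᵐ ω ∂μ, Continuous fun θ => h θ (ξ 0 ω))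
    (hint : ∀ C > (0 : ℝ), Integrable
      (fun ω => ⨆ θ : Metric.closedBall (0 : EuclideanSpace ℝ (Fin d)) C, |h θ (ξ 0 ω)|) μ) :
    Continuous (fun θ => ∫ ω, h θ (ξ 0 ω) ∂μ) ∧
    ∀ᵐ ω ∂μ, ∀ C > (0 : ℝ),
      Tendsto (fun M : ℕ => ⨆ θ : Metric.closedBall (0 : EuclideanSpace ℝ (Fin d)) C,
          |(M : ℝ)⁻¹ * ∑ i ∈ Finset.range M, h θ (ξ i ω) - ∫ ω', h θ (ξ 0 ω') ∂μ|)
        atTop (nhds 0) := by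
  constructor
  · rw [continuous_iff_continuousAt]
    intro θ₀
    have hC : (0 : ℝ) < ‖θ₀‖ + 1 := by positivity
    have hmaster := (master μ ξ hξmeas hξindep hξident h hmeas hcont hint (‖θ₀‖ + 1) hC).1
    refine hmaster.continuousAt (Metric.closedBall_mem_nhds_of_mem ?_)
    rw [Metric.mem_ball, dist_zero_right]
    linarith
  · have hae : ∀ᵐ ω ∂μ, ∀ k : ℕ,
        ∃ A : ℕ → C(Metric.closedBall (0 : EuclideanSpace ℝ (Fin d)) ((k : ℝ) + 1), ℝ),
        (∀ (M : ℕ) (θ : Metric.closedBall (0 : EuclideanSpace ℝ (Fin d)) ((k : ℝ) + 1)),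
          A M θ = (M : ℝ)⁻¹ * ∑ i ∈ Finset.range M, h θ.1 (ξ i ω) -
            ∫ ω', h θ.1 (ξ 0 ω') ∂μ) ∧
        Tendsto (fun M => ‖A M‖) atTop (𝓝 0) :=
      ae_all_iff.mpr fun k =>
        (master μ ξ hξmeas hξindep hξident h hmeas hcont hint ((k : ℝ) + 1)
          (by positivity)).2
    filter_upwards [hae] with ω hω
    intro C' hC'
    set k : ℕ := ⌈C'⌉₊ with hkdef
    have hk : C' ≤ (k : ℝ) + 1 := (Nat.le_ceil C').trans (by linarith)
    obtain ⟨A, hAeq, hAten⟩ := hω k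
    have hsub : Metric.closedBall (0 : EuclideanSpace ℝ (Fin d)) C' ⊆
        Metric.closedBall (0 : EuclideanSpace ℝ (Fin d)) ((k : ℝ) + 1) :=
      Metric.closedBall_subset_closedBall hk
    have habs : ∀ (M : ℕ) (θ : Metric.closedBall (0 : EuclideanSpace ℝ (Fin d)) C'),
        |(M : ℝ)⁻¹ * ∑ i ∈ Finset.range M, h θ.1 (ξ i ω) - ∫ ω', h θ.1 (ξ 0 ω') ∂μ|
          ≤ ‖A M‖ := by
      intro M θ
      rw [← hAeq M ⟨θ.1, hsub θ.2⟩, ← Real.norm_eq_abs]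
      exact ContinuousMap.norm_coe_le_norm _ _
    have hbdd : ∀ M : ℕ, BddAbove (Set.range fun θ : Metric.closedBall
        (0 : EuclideanSpace ℝ (Fin d)) C' =>
        |(M : ℝ)⁻¹ * ∑ i ∈ Finset.range M, h θ.1 (ξ i ω) - ∫ ω', h θ.1 (ξ 0 ω') ∂μ|) := by
      intro M
      refine ⟨‖A M‖, ?_⟩
      rintro _ ⟨θ, rfl⟩
      exact habs M θ
    refine squeeze_zero (fun M => ?_) (fun M => ?_) hAten
    · have h0 : (0 : ℝ) ≤ |(M : ℝ)⁻¹ * ∑ i ∈ Finset.range M,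
          h ((⟨0, by simp [hC'.le]⟩ : Metric.closedBall (0 : EuclideanSpace ℝ (Fin d)) C')).1
            (ξ i ω) - ∫ ω', h ((⟨0, by simp [hC'.le]⟩ : Metric.closedBall
              (0 : EuclideanSpace ℝ (Fin d)) C')).1 (ξ 0 ω') ∂μ| := abs_nonneg _
      exact h0.trans (le_ciSup (hbdd M) _)
    · exact Real.iSup_le (fun θ => habs M θ) (norm_nonneg _)


end USLLN

/-- Uniform strong law of large numbers: if `(ξ_i)` is i.i.d., `θ ↦ h(θ, ξ_1)` is a.s.
continuous, and `E[sup_{|θ| ≤ C} |h(θ, ξ_1)|] < ∞` for all `C > 0`, then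
`θ ↦ E[h(θ, ξ_1)]` is continuous and, a.s., for every `C > 0`,
`sup_{|θ| ≤ C} |(1/n) Σ_{i=1}^n h(θ, ξ_i) − E[h(θ, ξ_1)]| → 0`. -/
theorem uniform_strong_law_of_large_numbers {Ω : Type*} [MeasurableSpace Ω]
    (μ : Measure Ω) [IsProbabilityMeasure μ]
    {d n : ℕ} (ξ : ℕ → Ω → (Fin n → ℝ))
    (hξmeas : ∀ i, Measurable (ξ i))
    (hξindep : iIndepFun ξ μ)
    (hξident : ∀ i, Measure.map (ξ i) μ = Measure.map (ξ 0) μ)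
    (h : EuclideanSpace ℝ (Fin d) → (Fin n → ℝ) → ℝ)
    (hmeas : Measurable fun p : EuclideanSpace ℝ (Fin d) × (Fin n → ℝ) => h p.1 p.2)
    (hcont : ∀ᵐ ω ∂μ, Continuous fun θ => h θ (ξ 0 ω))
    (hint : ∀ C > (0 : ℝ), Integrable
      (fun ω => ⨆ θ : Metric.closedBall (0 : EuclideanSpace ℝ (Fin d)) C, |h θ (ξ 0 ω)|) μ) :
    Continuous (fun θ => ∫ ω, h θ (ξ 0 ω) ∂μ) ∧
    ∀ᵐ ω ∂μ, ∀ C > (0 : ℝ),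
      Tendsto (fun M : ℕ => ⨆ θ : Metric.closedBall (0 : EuclideanSpace ℝ (Fin d)) C,
          |(M : ℝ)⁻¹ * ∑ i ∈ Finset.range M, h θ (ξ i ω) - ∫ ω', h θ (ξ 0 ω') ∂μ|)
        atTop (nhds 0) :=
  USLLN.uniform_strong_law_of_large_numbers' μ ξ hξmeas hξindep hξident h hmeas hcont hint
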